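/- arXiv:math/0412563 — 2 statements merged into one kernel-verified Lean document; each statement's English description precedes it below -/
import Mathlib

section
/- Let Y be a Banach space, X a Banach space, Φ : X → Y a continuous linear surjective operator, A ⊆ X a bounded open convex set, K ⊆ Y a compact set with K ⊆ Φ(A), and z ∈ K, u ∈ Φ⁻¹(z) ∩ A. Then there exists a continuous function f : K → closure(A) such that Φ(f(y)) = y for all y ∈ K and f(z) = u. -/
open Set Metric Bornology Pointwise

/-- The Lebesgue covering dimension of a topological space, as an element of `ℕ∞`:
the least `n` such that every open cover admits an open refinement covering the space
in which every point belongs to at most `n + 1` sets. -/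
noncomputable def coveringDim (X : Type*) [TopologicalSpace X] : ℕ∞ :=
  sInf {n : ℕ∞ | ∀ 𝒰 : Set (Set X), (∀ U ∈ 𝒰, IsOpen U) → ⋃₀ 𝒰 = univ →
    ∃ 𝒱 : Set (Set X), (∀ V ∈ 𝒱, IsOpen V) ∧ ⋃₀ 𝒱 = univ ∧
      (∀ V ∈ 𝒱, ∃ U ∈ 𝒰, V ⊆ U) ∧
      ∀ x : X, {V ∈ 𝒱 | x ∈ V}.encard ≤ n + 1}

section aux

variable {X Y : Type*} [NormedAddCommGroup X] [NormedSpace ℝ X] [CompleteSpace X]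
    [NormedAddCommGroup Y] [NormedSpace ℝ Y] [CompleteSpace Y]

/-- Convexity of the fibers intersected with `A`. -/
lemma fiber_convex (Φ : X →L[ℝ] Y) (A : Set X) (hAc : Convex ℝ A) (c : Y) :
    Convex ℝ (Φ ⁻¹' {c} ∩ A) := by
  refine Convex.inter ?_ hAc
  intro x hx y hy a b ha hb hab
  simp only [mem_preimage, mem_singleton_iff] at *
  rw [map_add, map_smul, map_smul, hx, hy, ← add_smul, hab, one_smul]

/-- One step of the Michael selection iteration, with the value at `z` pinned to `u`. -/
lemma michael_step (Φ : X →L[ℝ] Y) (hΦ : Function.Surjective Φ)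
    (A : Set X) (hAo : IsOpen A) (hAc : Convex ℝ A)
    (K : Set Y)
    (z : Y) (hz : z ∈ K) (u : X) (hu : u ∈ Φ ⁻¹' {z} ∩ A)
    (ε δ : ℝ) (hε : 0 < ε) (hδ : 0 < δ)
    (g : C(K, X)) (hg2 : ∀ y : K, ∃ x ∈ Φ ⁻¹' {(y : Y)} ∩ A, ‖x - g y‖ < ε)
    (hgz : g ⟨z, hz⟩ = u) :
    ∃ g' : C(K, X), (∀ y : K, ∃ x ∈ Φ ⁻¹' {(y : Y)} ∩ A, ‖x - g' y‖ < δ) ∧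
      (∀ y, ‖g' y - g y‖ < ε + δ) ∧ g' ⟨z, hz⟩ = u := by
  have hFc : ∀ c : Y, Convex ℝ (Φ ⁻¹' {c} ∩ A) := fiber_convex Φ A hAc
  set z₀ : K := ⟨z, hz⟩ with hz₀
  -- the convex-valued target multifunction
  set t : K → Set X := fun y =>
    ((Φ ⁻¹' {(y : Y)} ∩ A) + ball (0 : X) δ) ∩ ball (g y) (ε + δ) with ht
  have htc : ∀ y, Convex ℝ (t y) := fun y =>
    (((hFc y).add (convex_ball 0 δ)).inter (convex_ball _ _))
  -- step 1 : an approximate selection via partition of unity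
  have hloc : ∀ y₀ : K, ∃ c : X, ∀ᶠ y in nhds y₀, c ∈ t y := by
    intro y₀
    obtain ⟨x₀, hx₀F, hx₀d⟩ := hg2 y₀
    refine ⟨x₀, ?_⟩
    have hr : (0 : ℝ) < ε + δ - ‖x₀ - g y₀‖ := by linarith
    set S : Set K := (Subtype.val ⁻¹' (Φ '' (ball x₀ δ ∩ A))) ∩
      (g ⁻¹' (ball (g y₀) (ε + δ - ‖x₀ - g y₀‖))) with hS
    have hSo : IsOpen S := by
      refine IsOpen.inter ?_ (isOpen_ball.preimage g.continuous)
      exact ((Φ.isOpenMap hΦ) _ (isOpen_ball.inter hAo)).preimage continuous_subtype_val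
    have hy₀S : y₀ ∈ S := by
      constructor
      · exact ⟨x₀, ⟨mem_ball_self hδ, hx₀F.2⟩, hx₀F.1⟩
      · simp only [mem_preimage, mem_ball, dist_self]; linarith
    filter_upwards [hSo.mem_nhds hy₀S] with y hy
    obtain ⟨hy1, hy2⟩ := hy
    obtain ⟨x', ⟨hx'b, hx'A⟩, hx'Φ⟩ := hy1
    constructor
    · refine ⟨x', ⟨hx'Φ, hx'A⟩, x₀ - x', ?_, ?_⟩
      · rw [mem_ball_zero_iff]
        have : dist x' x₀ < δ := hx'b
        rw [dist_eq_norm] at this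
        rw [← norm_neg]; simpa using this
      · module
    · rw [mem_ball, dist_eq_norm]
      have h2 : ‖g y - g y₀‖ < ε + δ - ‖x₀ - g y₀‖ := by
        have := hy2; simp only [mem_preimage, mem_ball, dist_eq_norm] at this; exact this
      have h2' : ‖g y₀ - g y‖ < ε + δ - ‖x₀ - g y₀‖ := by
        rw [← norm_neg]; simpa using h2
      calc ‖x₀ - g y‖ ≤ ‖x₀ - g y₀‖ + ‖g y₀ - g y‖ := by
              have := norm_add_le (x₀ - g y₀) (g y₀ - g y); simpa using this
        _ < ε + δ := by linarith
  obtain ⟨g₁, hg₁⟩ := exists_continuous_forall_mem_convex_of_local_const htc hloc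
  -- unpack the properties of g₁
  have hg₁d : ∀ y : K, (∃ x ∈ Φ ⁻¹' {(y : Y)} ∩ A, ‖x - g₁ y‖ < δ) ∧ ‖g₁ y - g y‖ < ε + δ := by
    intro y
    obtain ⟨⟨x₁, hx₁F, b, hb, hxb⟩, hball⟩ := hg₁ y
    rw [mem_ball_zero_iff] at hb
    refine ⟨⟨x₁, hx₁F, ?_⟩, ?_⟩
    · have : x₁ - g₁ y = -b := by rw [← hxb]; beta_reduce; abel
      rw [this, norm_neg]; exact hb
    · rw [mem_ball, dist_eq_norm] at hball; exact hball
  -- step 2 : pin the value at z₀ using a cutoff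
  set Sz : Set K := (Subtype.val ⁻¹' (Φ '' (ball u δ ∩ A))) ∩
    (g ⁻¹' (ball (g z₀) δ)) with hSz
  have hSzo : IsOpen Sz := by
    refine IsOpen.inter ?_ (isOpen_ball.preimage g.continuous)
    exact ((Φ.isOpenMap hΦ) _ (isOpen_ball.inter hAo)).preimage continuous_subtype_val
  have hzSz : z₀ ∈ Sz := by
    constructor
    · exact ⟨u, ⟨mem_ball_self hδ, hu.2⟩, hu.1⟩
    · simp only [mem_preimage, mem_ball, dist_self]; linarith
  obtain ⟨ρ, hρ, hρS⟩ := Metric.isOpen_iff.1 hSzo z₀ hzSz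
  set ψ : K → ℝ := fun y => max 0 (1 - dist y z₀ / ρ) with hψ
  have hψc : Continuous ψ :=
    continuous_const.max (continuous_const.sub
      ((continuous_id.dist continuous_const).div_const ρ))
  have hψ0 : ∀ y, 0 ≤ ψ y := fun y => le_max_left _ _
  have hψ1 : ∀ y, ψ y ≤ 1 := fun y => by
    refine max_le zero_le_one ?_
    have : 0 ≤ dist y z₀ / ρ := div_nonneg dist_nonneg hρ.le
    linarith
  have hψz : ψ z₀ = 1 := by simp [hψ]
  have hψpos : ∀ y, 0 < ψ y → y ∈ Sz := by
    intro y hy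
    apply hρS
    rw [mem_ball]
    by_contra h
    push_neg at h
    have : 1 - dist y z₀ / ρ ≤ 0 := by
      have : 1 ≤ dist y z₀ / ρ := (one_le_div hρ).2 h
      linarith
    simp only [hψ] at hy
    rw [max_eq_left this] at hy
    exact lt_irrefl _ hy
  -- the corrected map
  set g' : C(K, X) := ⟨fun y => (1 - ψ y) • g₁ y + ψ y • u,
    (((continuous_const.sub hψc).smul g₁.continuous).add (hψc.smul continuous_const))⟩
    with hg'
  have hg'app : ∀ y, g' y = (1 - ψ y) • g₁ y + ψ y • u := fun y => rfl
  have hSzmem : ∀ y : K, y ∈ Sz → (∃ x ∈ Φ ⁻¹' {(y : Y)} ∩ A, ‖x - u‖ < δ) ∧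
      ‖g y - u‖ < δ := by
    intro y hy
    obtain ⟨hy1, hy2⟩ := hy
    obtain ⟨x', ⟨hx'b, hx'A⟩, hx'Φ⟩ := hy1
    refine ⟨⟨x', ⟨hx'Φ, hx'A⟩, ?_⟩, ?_⟩
    · have : dist x' u < δ := hx'b
      rwa [dist_eq_norm] at this
    · have : dist (g y) (g z₀) < δ := hy2
      rwa [dist_eq_norm, hgz] at this
  refine ⟨g', ?_, ?_, ?_⟩
  · -- distance to the fiber
    intro y
    obtain ⟨⟨x₁, hx₁F, hx₁d⟩, _⟩ := hg₁d y
    rcases eq_or_lt_of_le (hψ0 y) with h0 | h0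
    · refine ⟨x₁, hx₁F, ?_⟩
      rw [hg'app, ← h0]
      simpa using hx₁d
    · obtain ⟨⟨xu, hxuF, hxud⟩, _⟩ := hSzmem y (hψpos y h0)
      refine ⟨(1 - ψ y) • x₁ + ψ y • xu, (hFc y) hx₁F hxuF (by linarith [hψ1 y]) (hψ0 y)
        (by ring), ?_⟩
      have heq : (1 - ψ y) • x₁ + ψ y • xu - g' y
          = (1 - ψ y) • (x₁ - g₁ y) + ψ y • (xu - u) := by
        rw [hg'app]; module
      rw [heq]
      have hb : ‖(1 - ψ y) • (x₁ - g₁ y) + ψ y • (xu - u)‖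
          ≤ (1 - ψ y) * ‖x₁ - g₁ y‖ + ψ y * ‖xu - u‖ := by
        refine (norm_add_le _ _).trans ?_
        rw [norm_smul, norm_smul, Real.norm_eq_abs, Real.norm_eq_abs,
          abs_of_nonneg (by linarith [hψ1 y]), abs_of_nonneg (hψ0 y)]
      nlinarith [mul_nonneg (by linarith [hψ1 y] : (0:ℝ) ≤ 1 - ψ y)
          (by linarith : (0:ℝ) ≤ δ - ‖x₁ - g₁ y‖),
        mul_pos h0 (by linarith : (0:ℝ) < δ - ‖xu - u‖)]
  · -- distance to g
    intro y
    obtain ⟨_, hgd⟩ := hg₁d y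
    rcases eq_or_lt_of_le (hψ0 y) with h0 | h0
    · rw [hg'app, ← h0]
      simpa using hgd
    · obtain ⟨_, hgu⟩ := hSzmem y (hψpos y h0)
      have heq : g' y - g y = (1 - ψ y) • (g₁ y - g y) + ψ y • (u - g y) := by
        rw [hg'app]; module
      rw [heq]
      have hb : ‖(1 - ψ y) • (g₁ y - g y) + ψ y • (u - g y)‖
          ≤ (1 - ψ y) * ‖g₁ y - g y‖ + ψ y * ‖u - g y‖ := by
        refine (norm_add_le _ _).trans ?_
        rw [norm_smul, norm_smul, Real.norm_eq_abs, Real.norm_eq_abs,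
          abs_of_nonneg (by linarith [hψ1 y]), abs_of_nonneg (hψ0 y)]
      have hgu' : ‖u - g y‖ < δ := by rw [← norm_neg]; simpa using hgu
      nlinarith [mul_nonneg (by linarith [hψ1 y] : (0:ℝ) ≤ 1 - ψ y)
          (by linarith : (0:ℝ) ≤ ε + δ - ‖g₁ y - g y‖),
        mul_pos h0 (by linarith : (0:ℝ) < ε + δ - ‖u - g y‖)]
  · -- value at z₀
    rw [hg'app, hψz]
    simp

end aux

theorem stmt_6 {X Y : Type*} [NormedAddCommGroup X] [NormedSpace ℝ X] [CompleteSpace X]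
    [NormedAddCommGroup Y] [NormedSpace ℝ Y] [CompleteSpace Y]
    (Φ : X →L[ℝ] Y) (hΦ : Function.Surjective Φ)
    (A : Set X) (hAb : IsBounded A) (hAo : IsOpen A) (hAc : Convex ℝ A)
    (K : Set Y) (hK : IsCompact K) (hKA : K ⊆ Φ '' A)
    (z : Y) (hz : z ∈ K) (u : X) (hu : u ∈ Φ ⁻¹' {z} ∩ A) :
    ∃ f : K → X, Continuous f ∧ (∀ y : K, f y ∈ closure A ∧ Φ (f y) = y) ∧
      f ⟨z, hz⟩ = u := by
  haveI : CompactSpace K := isCompact_iff_compactSpace.mp hK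
  -- a bound on distances to u inside A
  obtain ⟨C, hC⟩ := hAb.exists_norm_le
  set M : ℝ := 2 * C + 1 with hM
  have hCu : ‖u‖ ≤ C := hC u hu.2
  have hC0 : 0 ≤ C := le_trans (norm_nonneg u) hCu
  have hM0 : 0 < M := by simp only [hM]; linarith
  have hMn : ∀ n : ℕ, 0 < M / 2 ^ n := fun n => div_pos hM0 (by positivity)
  set P : ℕ → C(K, X) → Prop := fun n g =>
    (∀ y : K, ∃ x ∈ Φ ⁻¹' {(y : Y)} ∩ A, ‖x - g y‖ < M / 2 ^ n) ∧ g ⟨z, hz⟩ = u with hP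
  -- the base map
  have hbase : P 0 (ContinuousMap.const K u) := by
    constructor
    · intro y
      obtain ⟨a, haA, haΦ⟩ := hKA y.2
      refine ⟨a, ⟨haΦ, haA⟩, ?_⟩
      have : ‖a - u‖ ≤ ‖a‖ + ‖u‖ := norm_sub_le a u
      have ha : ‖a‖ ≤ C := hC a haA
      simp only [ContinuousMap.const_apply, hM, pow_zero, div_one]
      linarith
    · rfl
  -- the inductive step
  have hstep : ∀ n (g : C(K, X)), P n g → ∃ g' : C(K, X), P (n + 1) g' ∧
      dist g' g ≤ 2 * M * (1 / 2) ^ n := by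
    intro n g hg
    obtain ⟨g', h1, h2, h3⟩ := michael_step Φ hΦ A hAo hAc K z hz u hu
      (M / 2 ^ n) (M / 2 ^ (n + 1)) (hMn n) (hMn (n + 1)) g hg.1 hg.2
    refine ⟨g', ⟨h1, h3⟩, ?_⟩
    rw [ContinuousMap.dist_le (by positivity)]
    intro x
    rw [dist_eq_norm]
    have := h2 x
    have hmono : M / 2 ^ (n + 1) ≤ M / 2 ^ n := by
      gcongr <;> first | exact hM0.le | norm_num | omega
    have heq : M / 2 ^ n + M / 2 ^ (n + 1) ≤ 2 * M * (1 / 2) ^ n := by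
      have : (2 : ℝ) * M * (1 / 2) ^ n = 2 * (M / 2 ^ n) := by
        rw [div_pow, one_pow, mul_one_div]; ring
      rw [this]; linarith
    linarith
  choose! next hnextP hnextd using hstep
  set gs : ℕ → C(K, X) := fun n => Nat.rec (ContinuousMap.const K u) (fun n g => next n g) n
    with hgs
  have hPs : ∀ n, P n (gs n) := by
    intro n
    induction n with
    | zero => exact hbase
    | succ n ih => exact hnextP n (gs n) ih
  have hds : ∀ n, dist (gs n) (gs (n + 1)) ≤ 2 * M * (1 / 2) ^ n := by
    intro n
    rw [dist_comm]
    exact hnextd n (gs n) (hPs n)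
  have hcauchy : CauchySeq gs :=
    cauchySeq_of_le_geometric (1 / 2) (2 * M) (by norm_num) hds
  obtain ⟨f, hf⟩ := cauchySeq_tendsto_of_complete hcauchy
  have heval : ∀ y : K, Filter.Tendsto (fun n => gs n y) Filter.atTop (nhds (f y)) := by
    intro y
    exact ((continuous_eval_const y).continuousAt.tendsto).comp hf
  -- choose approximating points in the fibers
  have hx : ∀ y : K, ∃ x : ℕ → X, ∀ n, x n ∈ Φ ⁻¹' {(y : Y)} ∩ A ∧
      ‖x n - gs n y‖ < M / 2 ^ n := by
    intro y
    choose x hx1 hx2 using fun n => (hPs n).1 y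
    exact ⟨x, fun n => ⟨hx1 n, hx2 n⟩⟩
  have htendsM : Filter.Tendsto (fun n : ℕ => M / 2 ^ n) Filter.atTop (nhds 0) := by
    simp_rw [div_eq_mul_inv, ← inv_pow]
    rw [← mul_zero M]
    exact (tendsto_pow_atTop_nhds_zero_of_lt_one (by norm_num) (by norm_num)).const_mul M
  have hxlim : ∀ (y : K) (x : ℕ → X),
      (∀ n, ‖x n - gs n y‖ < M / 2 ^ n) →
      Filter.Tendsto x Filter.atTop (nhds (f y)) := by
    intro y x hxd
    refine Filter.Tendsto.congr_dist (f₁ := fun n => gs n y) (heval y) ?_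
    refine squeeze_zero (fun n => dist_nonneg) (fun n => ?_) htendsM
    rw [dist_comm, dist_eq_norm]
    exact (hxd n).le
  refine ⟨⇑f, f.continuous, ?_, ?_⟩
  · intro y
    obtain ⟨x, hxp⟩ := hx y
    have hlim : Filter.Tendsto x Filter.atTop (nhds (f y)) :=
      hxlim y x (fun n => (hxp n).2)
    constructor
    · exact mem_closure_of_tendsto hlim (Filter.Eventually.of_forall fun n => (hxp n).1.2)
    · have h1 : Filter.Tendsto (fun n => Φ (x n)) Filter.atTop (nhds (Φ (f y))) :=
        (Φ.continuous.tendsto (f y)).comp hlim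
      have h2 : ∀ n, Φ (x n) = (y : Y) := fun n => (hxp n).1.1
      have h3 : Filter.Tendsto (fun n => Φ (x n)) Filter.atTop (nhds (y : Y)) := by
        simp_rw [h2]; exact tendsto_const_nhds
      exact tendsto_nhds_unique h1 h3
  · have h1 : Filter.Tendsto (fun n => gs n ⟨z, hz⟩) Filter.atTop (nhds (f ⟨z, hz⟩)) :=
      heval ⟨z, hz⟩
    have h2 : ∀ n, gs n ⟨z, hz⟩ = u := fun n => (hPs n).2
    have h3 : Filter.Tendsto (fun n => gs n ⟨z, hz⟩) Filter.atTop (nhds u) := by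
      simp_rw [h2]; exact tendsto_const_nhds
    exact tendsto_nhds_unique h1 h3
end

section
/- Let I be a compact interval, E a Banach space, and f : I × E → E uniformly continuous with relatively compact range. Then the superposition operator Ψ : C¹(I, E) → C⁰(I, E), Ψ(u)(t) = f(t, u(t)), is completely continuous (continuous and maps bounded sets to relatively compact sets) and has bounded range. -/
open Set Metric Bornology

/-- The space `C¹(I, E)` encoded as pairs `(u, u')` of continuous maps on `I = [a, b]`
(with the product sup-topology, i.e. the `C¹` topology). -/
def C1set (a b : ℝ) (hab : a ≤ b) (E : Type*) [NormedAddCommGroup E] [NormedSpace ℝ E] :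
    Set (C(Set.Icc a b, E) × C(Set.Icc a b, E)) :=
  {p | ∀ t : Set.Icc a b, HasDerivWithinAt (Set.IccExtend hab ⇑p.1) (p.2 t) (Set.Icc a b) ↑t}

open BoundedContinuousFunction in
theorem stmt_13 {E : Type*} [NormedAddCommGroup E] [NormedSpace ℝ E] [CompleteSpace E]
    (a b : ℝ) (hab : a < b)
    (f : Set.Icc a b × E → E) (hf : UniformContinuous f)
    (hfr : IsCompact (closure (range f))) :
    ∃ Ψ : ↥(C1set a b hab.le E) → C(Set.Icc a b, E),
      (∀ p, ∀ t : Set.Icc a b, Ψ p t = f (t, p.1.1 t)) ∧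
      Continuous Ψ ∧
      (∀ B : Set ↥(C1set a b hab.le E), IsBounded B → IsCompact (closure (Ψ '' B))) ∧
      IsBounded (range Ψ) := by
  classical
  -- the superposition operator
  set Ψ : ↥(C1set a b hab.le E) → C(Set.Icc a b, E) := fun p =>
    ⟨fun t => f (t, p.1.1 t), hf.continuous.comp (continuous_id.prodMk (map_continuous p.1.1))⟩
    with hΨdef
  -- a uniform bound on the values of `f`
  obtain ⟨R, hR⟩ := isBounded_iff_forall_norm_le.mp (hfr.isBounded.subset subset_closure)
  have hR' : ∀ x, ‖f x‖ ≤ max R 0 := fun x => le_trans (hR _ (mem_range_self x)) (le_max_left _ _)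
  -- `Ψ` is uniformly continuous
  have hΨuc : UniformContinuous Ψ := by
    rw [Metric.uniformContinuous_iff]
    intro ε hε
    obtain ⟨δ, hδ, hδ'⟩ := Metric.uniformContinuous_iff.mp hf (ε / 2) (half_pos hε)
    refine ⟨δ, hδ, fun {p q} hpq => lt_of_le_of_lt ?_ (half_lt_self hε)⟩
    refine (ContinuousMap.dist_le (half_pos hε).le).mpr fun t => ?_
    refine le_of_lt (hδ' ?_)
    have h1 : dist (p.1.1 t) (q.1.1 t) ≤ dist p q := by
      calc dist (p.1.1 t) (q.1.1 t) ≤ dist p.1.1 q.1.1 := ContinuousMap.dist_apply_le_dist t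
        _ ≤ dist p.1 q.1 := by rw [Prod.dist_eq]; exact le_max_left _ _
        _ = dist p q := (Subtype.dist_eq p q).symm
    calc dist ((t, p.1.1 t) : Set.Icc a b × E) (t, q.1.1 t)
        = max (dist t t) (dist (p.1.1 t) (q.1.1 t)) := Prod.dist_eq
      _ ≤ max 0 (dist p q) := by
          apply max_le_max (le_of_eq (dist_self t)) h1
      _ < δ := by rw [max_eq_right dist_nonneg]; exact hpq
  refine ⟨Ψ, fun p t => rfl, hΨuc.continuous, ?_, ?_⟩
  · -- bounded sets are mapped to relatively compact sets
    intro B hB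
    rcases B.eq_empty_or_nonempty with rfl | ⟨p₀, hp₀⟩
    · simp
    obtain ⟨r, hr⟩ := hB.subset_closedBall p₀
    set M : ℝ := ‖p₀.1.2‖ + max r 0 with hM
    -- uniform Lipschitz bound on the first components of elements of `B`
    have lip : ∀ p : ↥(C1set a b hab.le E), p ∈ B → ∀ s t : Set.Icc a b,
        ‖p.1.1 t - p.1.1 s‖ ≤ M * ‖(t : ℝ) - (s : ℝ)‖ := by
      intro p hp s t
      have hnp : ‖p.1.2‖ ≤ M := by
        have h1 : dist p.1.2 p₀.1.2 ≤ r := by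
          calc dist p.1.2 p₀.1.2 ≤ dist p.1 p₀.1 := by
                rw [Prod.dist_eq]; exact le_max_right _ _
            _ = dist p p₀ := (Subtype.dist_eq p p₀).symm
            _ ≤ r := by simpa [Metric.mem_closedBall] using hr hp
        calc ‖p.1.2‖ = dist p.1.2 0 := (dist_zero_right _).symm
          _ ≤ dist p.1.2 p₀.1.2 + dist p₀.1.2 0 := dist_triangle _ _ _
          _ ≤ max r 0 + ‖p₀.1.2‖ := by
              rw [dist_zero_right]
              exact add_le_add (le_trans h1 (le_max_left _ _)) le_rfl
          _ = M := by rw [hM]; ring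
      have key := Convex.norm_image_sub_le_of_norm_hasDerivWithin_le
        (f := Set.IccExtend hab.le ⇑p.1.1) (f' := Set.IccExtend hab.le ⇑p.1.2)
        (s := Set.Icc a b) (C := M) (x := (s : ℝ)) (y := (t : ℝ))
        (fun x hx => by simpa [Set.IccExtend_of_mem hab.le _ hx] using p.2 ⟨x, hx⟩)
        (fun x hx => by
          rw [Set.IccExtend_of_mem hab.le _ hx]
          exact le_trans (ContinuousMap.norm_coe_le_norm p.1.2 ⟨x, hx⟩) hnp)
        (convex_Icc a b) s.2 t.2
      simpa [Set.IccExtend_of_mem hab.le _ s.2, Set.IccExtend_of_mem hab.le _ t.2] using key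
    -- move to bounded continuous functions and apply Arzelà–Ascoli
    set e := ContinuousMap.isometryEquivBoundedOfCompact (Set.Icc a b) E with he
    have hM0 : (0 : ℝ) < max 1 M := lt_of_lt_of_le one_pos (le_max_left _ _)
    have equi : Equicontinuous ((↑) : (e '' (Ψ '' B)) → Set.Icc a b → E) := by
      intro x₀
      rw [Metric.equicontinuousAt_iff]
      intro ε hε
      obtain ⟨δ, hδ, hδ'⟩ := Metric.uniformContinuous_iff.mp hf ε hε
      refine ⟨δ / max 1 M, div_pos hδ hM0, fun x hx g => ?_⟩
      obtain ⟨g', ⟨p, hpB, rfl⟩, hg⟩ := g.2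
      have hgapp : ∀ y : Set.Icc a b, (g : Set.Icc a b → E) y = f (y, p.1.1 y) := by
        intro y; rw [← hg]; rfl
      rw [hgapp, hgapp]
      refine hδ' ?_
      have hdx : dist (x₀ : ℝ) (x : ℝ) < δ / max 1 M := by
        rw [← Subtype.dist_eq, dist_comm]; exact hx
      rw [Prod.dist_eq]
      refine max_lt ?_ ?_
      · calc dist x₀ x = dist (x₀ : ℝ) (x : ℝ) := Subtype.dist_eq x₀ x
          _ < δ / max 1 M := hdx
          _ ≤ δ := by
              rw [div_le_iff₀ hM0]
              nlinarith [le_max_left (1:ℝ) M, hδ.le]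
      · calc dist (p.1.1 x₀) (p.1.1 x) = ‖p.1.1 x₀ - p.1.1 x‖ := dist_eq_norm _ _
          _ ≤ M * ‖(x₀ : ℝ) - (x : ℝ)‖ := lip p hpB x x₀
          _ ≤ (max 1 M) * ‖(x₀ : ℝ) - (x : ℝ)‖ :=
              mul_le_mul_of_nonneg_right (le_max_right _ _) (norm_nonneg _)
          _ < (max 1 M) * (δ / max 1 M) := by
              refine mul_lt_mul_of_pos_left ?_ hM0
              simpa [Real.dist_eq, Real.norm_eq_abs] using hdx
          _ = δ := by field_simp
    have in_s : ∀ (g : Set.Icc a b →ᵇ E) (x : Set.Icc a b),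
        g ∈ e '' (Ψ '' B) → g x ∈ closure (range f) := by
      rintro g x ⟨g', ⟨p, hpB, rfl⟩, hg⟩
      rw [← hg]
      exact subset_closure (mem_range_self _)
    have key : IsCompact (closure (e '' (Ψ '' B))) :=
      arzela_ascoli (closure (range f)) hfr (e '' (Ψ '' B)) in_s equi
    have h2 : IsCompact (e.toHomeomorph.symm '' closure (e '' (Ψ '' B))) :=
      key.image e.toHomeomorph.symm.continuous
    rw [Homeomorph.image_closure] at h2
    have h3 : e.toHomeomorph.symm '' (e '' (Ψ '' B)) = Ψ '' B := by
      ext g; simp [IsometryEquiv.coe_toHomeomorph_symm]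
    rwa [h3] at h2
  · -- the range of `Ψ` is bounded
    refine isBounded_iff_forall_norm_le.mpr ⟨max R 0, ?_⟩
    rintro g ⟨p, rfl⟩
    exact (ContinuousMap.norm_le _ (le_max_right R 0)).mpr fun t => hR' _
end
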